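/- arXiv:2209.00680 — 2 statements merged into one kernel-verified Lean document; each statement's English description precedes it below -/
import Mathlib

section
/- Let m ≥ 1, let F' and F be free groups on m generators, λ' ∈ F', λ ∈ F, ε : F' → F a group isomorphism, and τ : ℂ[F'] → ℂ[F] the induced ℂ-algebra isomorphism of group algebras. Let p : ℂ[F'] → ℂ[F']/(λ'−1) and q : ℂ[F] → ℂ[F]/(λ−1) be the quotient maps by the two-sided ideals generated by λ'−1 and λ−1. If there exists a ℂ-algebra isomorphism τ̃ : ℂ[F']/(λ'−1) → ℂ[F]/(λ−1) with τ̃ ∘ p = q ∘ τ, then the normal closure of {ε(λ')} in F equals the normal closure of {λ} in F. -/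
open MonoidAlgebra

/-- The relation on the group algebra `ℂ[F]` identifying `w - 1` with `0`;
quotienting by it (via `RingQuot`) gives the quotient of `ℂ[F]` by the
two-sided ideal generated by `w - 1`. -/
def relOf (m : ℕ) (w : FreeGroup (Fin m)) :
    MonoidAlgebra ℂ (FreeGroup (Fin m)) → MonoidAlgebra ℂ (FreeGroup (Fin m)) → Prop :=
  fun x y => x = MonoidAlgebra.of ℂ (FreeGroup (Fin m)) w - 1 ∧ y = 0

/-- Key lemma: a group element maps to `1` in `ℂ[F]/(w-1)` iff it lies in the
normal closure of `{w}`. -/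
lemma mkAlgHom_relOf_of_eq_one_iff (m : ℕ) (w g : FreeGroup (Fin m)) :
    RingQuot.mkAlgHom ℂ (relOf m w) (MonoidAlgebra.of ℂ (FreeGroup (Fin m)) g) = 1 ↔
      g ∈ Subgroup.normalClosure ({w} : Set (FreeGroup (Fin m))) := by
  haveI : (Subgroup.normalClosure ({w} : Set (FreeGroup (Fin m)))).Normal :=
    Subgroup.normalClosure_normal
  set N := Subgroup.normalClosure ({w} : Set (FreeGroup (Fin m))) with hN
  constructor
  · intro hg
    -- map down to the group algebra of the quotient group
    set f : MonoidAlgebra ℂ (FreeGroup (Fin m)) →ₐ[ℂ]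
        MonoidAlgebra ℂ (FreeGroup (Fin m) ⧸ N) :=
      MonoidAlgebra.lift ℂ (MonoidAlgebra ℂ (FreeGroup (Fin m) ⧸ N)) (FreeGroup (Fin m))
        ((MonoidAlgebra.of ℂ (FreeGroup (Fin m) ⧸ N)).comp (QuotientGroup.mk' N)) with hf
    have hw1 : (QuotientGroup.mk' N) w = 1 := by
      rw [QuotientGroup.mk'_apply, QuotientGroup.eq_one_iff]
      exact Subgroup.subset_normalClosure (Set.mem_singleton w)
    have hwrel : ∀ ⦃x y⦄, relOf m w x y → f x = f y := by
      rintro x y ⟨rfl, rfl⟩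
      rw [map_sub, map_one, map_zero, hf, MonoidAlgebra.lift_of, MonoidHom.comp_apply, hw1,
        map_one, sub_self]
    have h2 := congrArg (RingQuot.liftAlgHom ℂ ⟨f, hwrel⟩) hg
    rw [RingQuot.liftAlgHom_mkAlgHom_apply, map_one, hf, MonoidAlgebra.lift_of,
      MonoidHom.comp_apply] at h2
    have h3 : MonoidAlgebra.of ℂ (FreeGroup (Fin m) ⧸ N) ((QuotientGroup.mk' N) g) =
        MonoidAlgebra.of ℂ (FreeGroup (Fin m) ⧸ N) 1 := by simpa [MonoidAlgebra.one_def] using h2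
    have h4 := MonoidAlgebra.of_injective h3
    rw [QuotientGroup.mk'_apply, QuotientGroup.eq_one_iff] at h4
    exact h4
  · intro hg
    -- the set of elements mapping to 1 is a normal subgroup containing w
    have hmul : ∀ a b : FreeGroup (Fin m),
        RingQuot.mkAlgHom ℂ (relOf m w) (MonoidAlgebra.of ℂ (FreeGroup (Fin m)) (a * b)) =
          RingQuot.mkAlgHom ℂ (relOf m w) (MonoidAlgebra.of ℂ (FreeGroup (Fin m)) a) *
          RingQuot.mkAlgHom ℂ (relOf m w) (MonoidAlgebra.of ℂ (FreeGroup (Fin m)) b) := by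
      intro a b; rw [map_mul, map_mul]
    set H : Subgroup (FreeGroup (Fin m)) :=
      { carrier := {a | RingQuot.mkAlgHom ℂ (relOf m w)
            (MonoidAlgebra.of ℂ (FreeGroup (Fin m)) a) = 1}
        one_mem' := by
          simp only [Set.mem_setOf_eq, map_one]
        mul_mem' := by
          intro a b ha hb
          simp only [Set.mem_setOf_eq] at *
          rw [hmul, ha, hb, one_mul]
        inv_mem' := by
          intro a ha
          simp only [Set.mem_setOf_eq] at *
          have h5 := hmul a⁻¹ a
          rw [inv_mul_cancel, ha, mul_one, map_one, map_one] at h5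
          exact h5.symm } with hH
    have hHnormal : H.Normal := by
      constructor
      intro a ha b
      simp only [hH, Subgroup.mem_mk, Submonoid.mem_mk, Subsemigroup.mem_mk, Set.mem_setOf_eq] at *
      rw [hmul, hmul, ha, mul_one, ← map_mul, ← map_mul, mul_inv_cancel, map_one, map_one]
    have hwH : w ∈ H := by
      have hrel : relOf m w (MonoidAlgebra.of ℂ (FreeGroup (Fin m)) w - 1) 0 := ⟨rfl, rfl⟩
      have h6 := RingQuot.mkAlgHom_rel ℂ hrel
      rw [map_sub, map_zero, map_one, sub_eq_zero] at h6
      simpa [hH] using h6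
    have hle : N ≤ H :=
      Subgroup.normalClosure_le_normal (by simpa using hwH)
    exact hle hg

/-- If the isomorphism of group algebras `τ : ℂ[F'] ≃ ℂ[F]` induced by an isomorphism of
free groups `ε : F' ≃ F` descends to an isomorphism `τ̃ : ℂ[F']/(λ'-1) ≃ ℂ[F]/(λ-1)` with
`τ̃ ∘ p = q ∘ τ`, then the normal closure of `{ε(λ')}` in `F` equals the normal closure of
`{λ}` in `F`. -/
theorem normalClosure_eq_of_descends_to_quotient_iso (m : ℕ) (hm : 1 ≤ m)
    (lam' lam : FreeGroup (Fin m))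
    (ε : FreeGroup (Fin m) ≃* FreeGroup (Fin m))
    (τtilde : RingQuot (relOf m lam') ≃ₐ[ℂ] RingQuot (relOf m lam))
    (hcomm : ∀ x : MonoidAlgebra ℂ (FreeGroup (Fin m)),
      τtilde (RingQuot.mkAlgHom ℂ (relOf m lam') x) =
        RingQuot.mkAlgHom ℂ (relOf m lam) (MonoidAlgebra.domCongr ℂ ℂ ε x)) :
    Subgroup.normalClosure ({ε lam'} : Set (FreeGroup (Fin m))) =
      Subgroup.normalClosure ({lam} : Set (FreeGroup (Fin m))) := by
  haveI : (Subgroup.normalClosure ({lam} : Set (FreeGroup (Fin m)))).Normal :=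
    Subgroup.normalClosure_normal
  haveI : (Subgroup.normalClosure ({ε lam'} : Set (FreeGroup (Fin m)))).Normal :=
    Subgroup.normalClosure_normal
  -- ε lam' lies in the normal closure of {lam}
  have h1 : ε lam' ∈ Subgroup.normalClosure ({lam} : Set (FreeGroup (Fin m))) := by
    have hlam' : RingQuot.mkAlgHom ℂ (relOf m lam')
        (MonoidAlgebra.of ℂ (FreeGroup (Fin m)) lam') = 1 :=
      (mkAlgHom_relOf_of_eq_one_iff m lam' lam').mpr
        (Subgroup.subset_normalClosure (Set.mem_singleton _))
    have h := hcomm (MonoidAlgebra.of ℂ (FreeGroup (Fin m)) lam')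
    rw [hlam', map_one] at h
    have hd : MonoidAlgebra.domCongr ℂ ℂ ε (MonoidAlgebra.of ℂ (FreeGroup (Fin m)) lam') =
        MonoidAlgebra.of ℂ (FreeGroup (Fin m)) (ε lam') := by
      simp [MonoidAlgebra.of_apply]
    rw [hd] at h
    exact (mkAlgHom_relOf_of_eq_one_iff m lam (ε lam')).mp h.symm
  -- ε.symm lam lies in the normal closure of {lam'}
  have h2 : ε.symm lam ∈ Subgroup.normalClosure ({lam'} : Set (FreeGroup (Fin m))) := by
    have hlam : RingQuot.mkAlgHom ℂ (relOf m lam)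
        (MonoidAlgebra.of ℂ (FreeGroup (Fin m)) lam) = 1 :=
      (mkAlgHom_relOf_of_eq_one_iff m lam lam).mpr
        (Subgroup.subset_normalClosure (Set.mem_singleton _))
    have h := hcomm (MonoidAlgebra.of ℂ (FreeGroup (Fin m)) (ε.symm lam))
    have hd : MonoidAlgebra.domCongr ℂ ℂ ε
        (MonoidAlgebra.of ℂ (FreeGroup (Fin m)) (ε.symm lam)) =
        MonoidAlgebra.of ℂ (FreeGroup (Fin m)) lam := by
      simp [MonoidAlgebra.of_apply]
    rw [hd, hlam] at h
    have h1' : τtilde (RingQuot.mkAlgHom ℂ (relOf m lam')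
        (MonoidAlgebra.of ℂ (FreeGroup (Fin m)) (ε.symm lam))) = τtilde 1 := by
      rw [map_one]; exact h
    exact (mkAlgHom_relOf_of_eq_one_iff m lam' (ε.symm lam)).mp (τtilde.injective h1')
  -- lam lies in the normal closure of {ε lam'}
  have h3 : lam ∈ Subgroup.normalClosure ({ε lam'} : Set (FreeGroup (Fin m))) := by
    have hmap : Subgroup.map ε.toMonoidHom
        (Subgroup.normalClosure ({lam'} : Set (FreeGroup (Fin m)))) =
        Subgroup.normalClosure (ε.toMonoidHom '' ({lam'} : Set (FreeGroup (Fin m)))) :=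
      Subgroup.map_normalClosure _ _ ε.surjective
    have hmem : ε (ε.symm lam) ∈ Subgroup.map ε.toMonoidHom
        (Subgroup.normalClosure ({lam'} : Set (FreeGroup (Fin m)))) := ⟨ε.symm lam, h2, rfl⟩
    rw [hmap] at hmem
    simpa using hmem
  exact le_antisymm
    (Subgroup.normalClosure_le_normal (by simpa using h1))
    (Subgroup.normalClosure_le_normal (by simpa using h3))
end

section
/- Let F₆ be the free group on six generators d, f, g, i, j, l and F₄ the free group on four generators d, g, i, l. Then the quotient of the group algebra ℂ[F₆] by the two-sided ideal generated by the three elements jg − gd, lf − j, and id − lif is isomorphic as a ℂ-algebra to the quotient of ℂ[F₄] by the two-sided ideal generated by the single element l·i⁻¹·l⁻¹·i·d·g·d⁻¹·g⁻¹ − 1 (which is the group algebra ℂ[π₁(Σ₂)] of the genus 2 surface group). -/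
namespace Genus2Example

/-- The free group on the six generators `d, f, g, i, j, l`. -/
abbrev F6 := FreeGroup (Fin 6)
/-- The free group on the four generators `d, g, i, l`. -/
abbrev F4 := FreeGroup (Fin 4)

def d : F6 := FreeGroup.of 0
def f : F6 := FreeGroup.of 1
def g : F6 := FreeGroup.of 2
def i : F6 := FreeGroup.of 3
def j : F6 := FreeGroup.of 4
def l : F6 := FreeGroup.of 5

def d' : F4 := FreeGroup.of 0
def g' : F4 := FreeGroup.of 1
def i' : F4 := FreeGroup.of 2
def l' : F4 := FreeGroup.of 3

/-- The relation on `ℂ[F₆]` identifying the three elements `jg - gd`, `lf - j`, `id - lif`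
with `0`; quotienting by it (via `RingQuot`) gives the quotient of `ℂ[F₆]` by the two-sided
ideal generated by these three elements. -/
def rel6 : MonoidAlgebra ℂ F6 → MonoidAlgebra ℂ F6 → Prop := fun x y =>
  (x = MonoidAlgebra.of ℂ F6 (j * g) - MonoidAlgebra.of ℂ F6 (g * d) ∧ y = 0) ∨
  (x = MonoidAlgebra.of ℂ F6 (l * f) - MonoidAlgebra.of ℂ F6 j ∧ y = 0) ∨
  (x = MonoidAlgebra.of ℂ F6 (i * d) - MonoidAlgebra.of ℂ F6 (l * i * f) ∧ y = 0)

/-- The relation on `ℂ[F₄]` identifying `l·i⁻¹·l⁻¹·i·d·g·d⁻¹·g⁻¹ - 1` with `0`; quotienting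
by it (via `RingQuot`) gives the group algebra `ℂ[π₁(Σ₂)]` of the genus 2 surface group. -/
def rel4 : MonoidAlgebra ℂ F4 → MonoidAlgebra ℂ F4 → Prop := fun x y =>
  x = MonoidAlgebra.of ℂ F4 (l' * i'⁻¹ * l'⁻¹ * i' * d' * g' * d'⁻¹ * g'⁻¹) - 1 ∧ y = 0

noncomputable section Aux

open MonoidAlgebra

abbrev A6 := RingQuot rel6
abbrev A4 := RingQuot rel4

abbrev mk6 : MonoidAlgebra ℂ F6 →ₐ[ℂ] A6 := RingQuot.mkAlgHom ℂ rel6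
abbrev mk4 : MonoidAlgebra ℂ F4 →ₐ[ℂ] A4 := RingQuot.mkAlgHom ℂ rel4

/-- Group elements become units in the quotient of the group algebra. -/
def unitHom6 : F6 →* A6ˣ where
  toFun x :=
    { val := mk6 (of ℂ F6 x)
      inv := mk6 (of ℂ F6 x⁻¹)
      val_inv := by rw [← map_mul, ← map_mul, mul_inv_cancel, map_one, map_one]
      inv_val := by rw [← map_mul, ← map_mul, inv_mul_cancel, map_one, map_one] }
  map_one' := by
    ext
    show mk6 (of ℂ F6 1) = 1
    rw [map_one, map_one]
  map_mul' x y := by ext; simp [← map_mul]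

def unitHom4 : F4 →* A4ˣ where
  toFun x :=
    { val := mk4 (of ℂ F4 x)
      inv := mk4 (of ℂ F4 x⁻¹)
      val_inv := by rw [← map_mul, ← map_mul, mul_inv_cancel, map_one, map_one]
      inv_val := by rw [← map_mul, ← map_mul, inv_mul_cancel, map_one, map_one] }
  map_one' := by
    ext
    show mk4 (of ℂ F4 1) = 1
    rw [map_one, map_one]
  map_mul' x y := by ext; simp [← map_mul]

@[simp] lemma unitHom6_val (x : F6) : (unitHom6 x : A6) = mk6 (of ℂ F6 x) := rfl
@[simp] lemma unitHom4_val (x : F4) : (unitHom4 x : A4) = mk4 (of ℂ F4 x) := rfl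

def w64 : Fin 6 → F4 := fun n =>
  match n with
  | 0 => d'
  | 1 => l'⁻¹ * (g' * d' * g'⁻¹)
  | 2 => g'
  | 3 => i'
  | 4 => g' * d' * g'⁻¹
  | 5 => l'

def w46 : Fin 4 → F6 := fun n =>
  match n with
  | 0 => d
  | 1 => g
  | 2 => i
  | 3 => l

def φ : F6 →* F4 := FreeGroup.lift w64
def ψ : F4 →* F6 := FreeGroup.lift w46

lemma mk6_eq {x y : F6} (h : rel6 (of ℂ F6 x - of ℂ F6 y) 0) :
    mk6 (of ℂ F6 x) = mk6 (of ℂ F6 y) := by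
  have := RingQuot.mkAlgHom_rel ℂ h
  rw [map_sub, map_zero, sub_eq_zero] at this
  exact this

lemma mk4_r : mk4 (of ℂ F4 (l' * i'⁻¹ * l'⁻¹ * i' * d' * g' * d'⁻¹ * g'⁻¹)) = 1 := by
  have := RingQuot.mkAlgHom_rel ℂ (show rel4 _ 0 from ⟨rfl, rfl⟩)
  rw [map_sub, map_zero, map_one, sub_eq_zero] at this
  exact this

lemma hu1 : unitHom6 (j * g) = unitHom6 (g * d) :=
  Units.ext (mk6_eq (Or.inl ⟨rfl, rfl⟩))

lemma hu2 : unitHom6 (l * f) = unitHom6 j :=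
  Units.ext (mk6_eq (Or.inr (Or.inl ⟨rfl, rfl⟩)))

lemma hu3 : unitHom6 (i * d) = unitHom6 (l * i * f) :=
  Units.ext (mk6_eq (Or.inr (Or.inr ⟨rfl, rfl⟩)))

lemma inv_rel {G : Type*} [Group G] {D Gg I L : G}
    (h : L * I⁻¹ * L⁻¹ * I * D * Gg * D⁻¹ * Gg⁻¹ = 1) :
    I * D = L * I * (L⁻¹ * (Gg * D * Gg⁻¹)) := by
  calc I * D
      = L * I * L⁻¹ * (L * I⁻¹ * L⁻¹ * I * D * Gg * D⁻¹ * Gg⁻¹) * (Gg * D * Gg⁻¹) := by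
        group
    _ = L * I * L⁻¹ * 1 * (Gg * D * Gg⁻¹) := by rw [h]
    _ = L * I * (L⁻¹ * (Gg * D * Gg⁻¹)) := by group

lemma surface_rel {G : Type*} [Group G] {D F Gg I J L : G}
    (h1 : J * Gg = Gg * D) (h2 : L * F = J) (h3 : I * D = L * I * F) :
    L * I⁻¹ * L⁻¹ * I * D * Gg * D⁻¹ * Gg⁻¹ = 1 := by
  have hJ : J = Gg * D * Gg⁻¹ := by rw [← h1]; group
  have hF : F = L⁻¹ * (Gg * D * Gg⁻¹) := by rw [← hJ, ← h2]; group
  have h3' : I * D = L * I * (L⁻¹ * (Gg * D * Gg⁻¹)) := by rw [← hF]; exact h3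
  calc L * I⁻¹ * L⁻¹ * I * D * Gg * D⁻¹ * Gg⁻¹
      = L * I⁻¹ * L⁻¹ * (I * D) * (Gg * D⁻¹ * Gg⁻¹) := by group
    _ = L * I⁻¹ * L⁻¹ * (L * I * (L⁻¹ * (Gg * D * Gg⁻¹))) * (Gg * D⁻¹ * Gg⁻¹) := by
        rw [h3']
    _ = 1 := by group

def Φ0 : MonoidAlgebra ℂ F6 →ₐ[ℂ] A4 :=
  MonoidAlgebra.lift ℂ A4 F6 ((Units.coeHom A4).comp (unitHom4.comp φ))

def Ψ0 : MonoidAlgebra ℂ F4 →ₐ[ℂ] A6 :=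
  MonoidAlgebra.lift ℂ A6 F4 ((Units.coeHom A6).comp (unitHom6.comp ψ))

lemma Φ0_of (x : F6) : Φ0 (of ℂ F6 x) = mk4 (of ℂ F4 (φ x)) := by
  simp [Φ0, MonoidAlgebra.lift_of]

lemma Ψ0_of (x : F4) : Ψ0 (of ℂ F4 x) = mk6 (of ℂ F6 (ψ x)) := by
  simp [Ψ0, MonoidAlgebra.lift_of]

lemma hΦ : ∀ ⦃x y : MonoidAlgebra ℂ F6⦄, rel6 x y → Φ0 x = Φ0 y := by
  rintro x y (⟨rfl, rfl⟩ | ⟨rfl, rfl⟩ | ⟨rfl, rfl⟩) <;>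
    rw [map_sub, map_zero, Φ0_of, Φ0_of, sub_eq_zero]
  · have e : φ (j * g) = φ (g * d) := by
      simp only [map_mul, φ, j, g, d, FreeGroup.lift_apply_of, w64]
      group
    rw [e]
  · have e : φ (l * f) = φ j := by
      simp only [map_mul, φ, l, f, j, FreeGroup.lift_apply_of, w64]
      group
    rw [e]
  · have e1 : φ (i * d) = i' * d' := by
      simp only [map_mul, φ, i, d, FreeGroup.lift_apply_of, w64]
    have e2 : φ (l * i * f) = l' * i' * (l'⁻¹ * (g' * d' * g'⁻¹)) := by
      simp only [map_mul, φ, l, i, f, FreeGroup.lift_apply_of, w64]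
    rw [e1, e2]
    have hR : unitHom4 (l' * i'⁻¹ * l'⁻¹ * i' * d' * g' * d'⁻¹ * g'⁻¹) = 1 :=
      Units.ext mk4_r
    have hu : unitHom4 (i' * d') = unitHom4 (l' * i' * (l'⁻¹ * (g' * d' * g'⁻¹))) := by
      simp only [map_mul, map_inv]
      exact inv_rel (by simpa only [map_mul, map_inv] using hR)
    exact congrArg Units.val hu

lemma hΨ : ∀ ⦃x y : MonoidAlgebra ℂ F4⦄, rel4 x y → Ψ0 x = Ψ0 y := by
  rintro x y ⟨rfl, rfl⟩
  rw [map_sub, map_zero, map_one, Ψ0_of, sub_eq_zero]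
  have e : ψ (l' * i'⁻¹ * l'⁻¹ * i' * d' * g' * d'⁻¹ * g'⁻¹) =
      l * i⁻¹ * l⁻¹ * i * d * g * d⁻¹ * g⁻¹ := by
    simp only [map_mul, map_inv, ψ, l, i, d, g, d', g', i', l', FreeGroup.lift_apply_of, w46]
  rw [e]
  have h1 : unitHom6 j * unitHom6 g = unitHom6 g * unitHom6 d := by
    rw [← map_mul, ← map_mul]; exact hu1
  have h2 : unitHom6 l * unitHom6 f = unitHom6 j := by
    rw [← map_mul]; exact hu2
  have h3 : unitHom6 i * unitHom6 d = unitHom6 l * unitHom6 i * unitHom6 f := by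
    rw [← map_mul, ← map_mul, ← map_mul]; exact hu3
  have key : unitHom6 (l * i⁻¹ * l⁻¹ * i * d * g * d⁻¹ * g⁻¹) = 1 := by
    simp only [map_mul, map_inv]
    exact surface_rel h1 h2 h3
  calc mk6 (of ℂ F6 (l * i⁻¹ * l⁻¹ * i * d * g * d⁻¹ * g⁻¹))
      = ((unitHom6 (l * i⁻¹ * l⁻¹ * i * d * g * d⁻¹ * g⁻¹) : A6ˣ) : A6) := rfl
    _ = ((1 : A6ˣ) : A6) := by rw [key]
    _ = 1 := Units.val_one

def Φ : A6 →ₐ[ℂ] A4 := RingQuot.liftAlgHom ℂ ⟨Φ0, hΦ⟩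
def Ψ : A4 →ₐ[ℂ] A6 := RingQuot.liftAlgHom ℂ ⟨Ψ0, hΨ⟩

lemma Φ_mk (x : MonoidAlgebra ℂ F6) : Φ (mk6 x) = Φ0 x :=
  RingQuot.liftAlgHom_mkAlgHom_apply ℂ Φ0 hΦ x

lemma Ψ_mk (x : MonoidAlgebra ℂ F4) : Ψ (mk4 x) = Ψ0 x :=
  RingQuot.liftAlgHom_mkAlgHom_apply ℂ Ψ0 hΨ x

lemma φψ : ∀ x : F4, φ (ψ x) = x := by
  intro x
  have : φ.comp ψ = MonoidHom.id F4 := by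
    ext n
    fin_cases n <;>
      simp [φ, ψ, FreeGroup.lift_apply_of, w46, w64, d, g, i, l, d', g', i', l']
  exact DFunLike.congr_fun this x

lemma ψφ_units : ∀ x : F6, unitHom6 (ψ (φ x)) = unitHom6 x := by
  have h1 : unitHom6 j * unitHom6 g = unitHom6 g * unitHom6 d := by
    rw [← map_mul, ← map_mul]; exact hu1
  have h2 : unitHom6 l * unitHom6 f = unitHom6 j := by
    rw [← map_mul]; exact hu2
  have hJ : unitHom6 j = unitHom6 g * unitHom6 d * (unitHom6 g)⁻¹ := by
    rw [← h1]; group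
  have hF : unitHom6 f = (unitHom6 l)⁻¹ * (unitHom6 g * unitHom6 d * (unitHom6 g)⁻¹) := by
    rw [← hJ, ← h2]; group
  intro x
  have heq : unitHom6.comp (ψ.comp φ) = unitHom6 := by
    apply FreeGroup.ext_hom
    intro n
    show unitHom6 (ψ (φ (FreeGroup.of n))) = unitHom6 (FreeGroup.of n)
    fin_cases n
    · show unitHom6 (ψ (φ d)) = unitHom6 d
      simp only [φ, d, FreeGroup.lift_apply_of, w64, ψ, d', w46]
    · show unitHom6 (ψ (φ f)) = unitHom6 f
      have e : ψ (φ f) = l⁻¹ * (g * d * g⁻¹) := by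
        simp only [φ, f, FreeGroup.lift_apply_of, w64, map_mul, map_inv, ψ, d', g', l', w46]
      rw [e]
      simp only [map_mul, map_inv, hF]
    · show unitHom6 (ψ (φ g)) = unitHom6 g
      simp only [φ, g, FreeGroup.lift_apply_of, w64, ψ, g', w46]
    · show unitHom6 (ψ (φ i)) = unitHom6 i
      simp only [φ, i, FreeGroup.lift_apply_of, w64, ψ, i', w46]
    · show unitHom6 (ψ (φ j)) = unitHom6 j
      have e : ψ (φ j) = g * d * g⁻¹ := by
        simp only [φ, j, FreeGroup.lift_apply_of, w64, map_mul, map_inv, ψ, d', g', w46]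
      rw [e]
      simp only [map_mul, map_inv, hJ]
    · show unitHom6 (ψ (φ l)) = unitHom6 l
      simp only [φ, l, FreeGroup.lift_apply_of, w64, ψ, l', w46]
  exact DFunLike.congr_fun heq x

/-- **Example 2.4.** The quotient of `ℂ[F₆]` by the two-sided ideal generated by
`jg - gd`, `lf - j` and `id - lif` is isomorphic as a `ℂ`-algebra to the quotient of
`ℂ[F₄]` by the two-sided ideal generated by `l·i⁻¹·l⁻¹·i·d·g·d⁻¹·g⁻¹ - 1`, i.e. to the
group algebra of the genus 2 surface group. -/
theorem jacobiAlgebra_iso_surfaceGroupAlgebra :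
    Nonempty (RingQuot rel6 ≃ₐ[ℂ] RingQuot rel4) := by
  have c1 : Φ.comp Ψ = AlgHom.id ℂ A4 := by
    apply RingQuot.ringQuot_ext'
    apply MonoidAlgebra.algHom_ext
    intro x
    show Φ (Ψ (mk4 (MonoidAlgebra.of ℂ F4 x))) = mk4 (MonoidAlgebra.of ℂ F4 x)
    rw [Ψ_mk, Ψ0_of, Φ_mk, Φ0_of, φψ]
    exact Subsingleton.elim _ _
  have c2 : Ψ.comp Φ = AlgHom.id ℂ A6 := by
    apply RingQuot.ringQuot_ext'
    apply MonoidAlgebra.algHom_ext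
    intro x
    show Ψ (Φ (mk6 (MonoidAlgebra.of ℂ F6 x))) = mk6 (MonoidAlgebra.of ℂ F6 x)
    rw [Φ_mk, Φ0_of, Ψ_mk, Ψ0_of]
    calc mk6 (MonoidAlgebra.of ℂ F6 (ψ (φ x)))
        = ((unitHom6 (ψ (φ x)) : A6ˣ) : A6) := rfl
      _ = ((unitHom6 x : A6ˣ) : A6) := by rw [ψφ_units x]
      _ = mk6 (MonoidAlgebra.of ℂ F6 x) := rfl
    exact Subsingleton.elim _ _
  exact ⟨AlgEquiv.ofAlgHom Φ Ψ c1 c2⟩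

end Aux

end Genus2Example
end
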